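/- Constant-degree transformation preserving shortest paths: suppose w(u,u) = ⊤ for every u ∈ V (no self-loops), let E := {(u,v) ∈ V × V : w(u,v) < ⊤} and m := |E|. Then there exist a finite type V' with |V'| ≤ 2m + |V|, a weight function w' : V' → V' → ℝ≥0∞, and an injective map φ : V → V' such that: (i) every x ∈ V' has at most 2 out-neighbors and at most 2 in-neighbors, i.e. |{y : w'(x,y) < ⊤}| ≤ 2 and |{y : w'(y,x) < ⊤}| ≤ 2; (ii) the number of pairs (x,y) with w'(x,y) < ⊤ is at most 3m; (iii) every finite value w'(x,y) is either 0 or equal to w(u,v) for some (u,v) ∈ E; (iv) for all u, v ∈ V, the distance from φ(u) to φ(v) in (V', w') equals dist(u,v) in (V, w). -/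

import Mathlib

open scoped ENNReal

namespace SSSP

variable {V : Type*}

/-- The weight of a walk (a list of vertices): the sum of `w` over consecutive pairs.
A one-vertex walk has weight 0. -/
noncomputable def walkWeight (w : V → V → ℝ≥0∞) : List V → ℝ≥0∞
  | [] => 0
  | [_] => 0
  | a :: b :: p => w a b + walkWeight w (b :: p)

/-- `p` is a walk from `u` to `v`: a nonempty list beginning at `u` and ending at `v`. -/
def IsWalk (u v : V) (p : List V) : Prop :=
  p ≠ [] ∧ p.head? = some u ∧ p.getLast? = some v

/-- The distance from `u` to `v`: the infimum of the weights of all walks from `u` to `v`. -/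
noncomputable def dist (w : V → V → ℝ≥0∞) (u v : V) : ℝ≥0∞ :=
  ⨅ p : {p : List V // IsWalk u v p}, walkWeight w p.1

/-- The shortest path (from `s`) to `v` visits `u`. -/
def Visits (w : V → V → ℝ≥0∞) (s u v : V) : Prop :=
  dist w s u + dist w u v = dist w s v

/-- The uniqueness assumption: any two distinct walks starting from `s` with finite
weight have different weights. -/
def UniqueWeights (w : V → V → ℝ≥0∞) (s : V) : Prop :=
  ∀ p q : List V, p ≠ [] → q ≠ [] → p.head? = some s → q.head? = some s →
    walkWeight w p ≠ ⊤ → walkWeight w q ≠ ⊤ → walkWeight w p = walkWeight w q → p = q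

/-- The relaxation operator. -/
noncomputable def relax (w : V → V → ℝ≥0∞) (f : V → ℝ≥0∞) : V → ℝ≥0∞ :=
  fun v => min (f v) (⨅ u, f u + w u v)

end SSSP

set_option linter.unusedSectionVars false

namespace SSSP

variable {V : Type*}

section WalkLemmas
variable (w : V → V → ℝ≥0∞)

lemma dist_le_walkWeight {u v : V} {p : List V} (h : IsWalk u v p) :
    dist w u v ≤ walkWeight w p :=
  iInf_le (fun q : {q : List V // IsWalk u v q} => walkWeight w q.1) ⟨p, h⟩

lemma isWalk_single (u : V) : IsWalk u u [u] := ⟨by simp, rfl, rfl⟩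

lemma dist_self_le (u : V) : dist w u u ≤ 0 := by
  simpa [walkWeight] using dist_le_walkWeight w (isWalk_single u)

lemma isWalk_pair (u v : V) : IsWalk u v [u, v] := ⟨by simp, rfl, rfl⟩

lemma dist_le_w (u v : V) : dist w u v ≤ w u v := by
  simpa [walkWeight] using dist_le_walkWeight w (isWalk_pair u v)

lemma walkWeight_append : ∀ (p : List V) {x : V} (q : List V), p.getLast? = some x →
    q.head? = some x →
    walkWeight w (p ++ q.tail) = walkWeight w p + walkWeight w q
  | [], _, _, hp, _ => by simp at hp
  | [a], x, q, hp, hq => by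
      cases q with
      | nil => simp at hq
      | cons b t =>
        have ha : a = x := by simpa using hp
        have hb : b = x := by simpa using hq
        subst ha; subst hb
        simp [walkWeight]
  | a :: c :: p', x, q, hp, hq => by
      have h2 := walkWeight_append (c :: p') q (by simpa using hp) hq
      simp only [List.cons_append, walkWeight, List.append_eq] at h2 ⊢
      rw [h2, add_assoc]

lemma isWalk_append {u v x : V} {p q : List V} (hp : IsWalk u x p) (hq : IsWalk x v q) :
    IsWalk u v (p ++ q.tail) := by
  obtain ⟨hp0, hp1, hp2⟩ := hp
  obtain ⟨hq0, hq1, hq2⟩ := hq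
  refine ⟨by simp [hp0], ?_, ?_⟩
  · rw [List.head?_append]
    cases p with
    | nil => exact absurd rfl hp0
    | cons a t => simpa using hp1
  · rw [List.getLast?_append]
    cases q with
    | nil => exact absurd rfl hq0
    | cons b t =>
      cases t with
      | nil =>
        have hb1 : b = x := by simpa using hq1
        have hb2 : b = v := by simpa using hq2
        simp only [List.tail_cons, List.getLast?_nil, Option.none_or, hp2]
        rw [← hb1, hb2]
      | cons c t' =>
        have : (c :: t').getLast? = some v := by
          rw [← hq2]; simp [List.getLast?_cons_cons]
        simp [this]

lemma dist_triangle (u v x : V) : dist w u x ≤ dist w u v + dist w v x := by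
  have h1 : dist w u v + dist w v x
      = ⨅ p : {p : List V // IsWalk u v p}, (walkWeight w p.1 + dist w v x) := by
    rw [dist, ENNReal.iInf_add]
  rw [h1]
  refine le_iInf fun p => ?_
  have h2 : walkWeight w p.1 + dist w v x
      = ⨅ q : {q : List V // IsWalk v x q}, (walkWeight w p.1 + walkWeight w q.1) := by
    rw [dist, ENNReal.add_iInf]
  rw [h2]
  refine le_iInf fun q => ?_
  calc dist w u x ≤ walkWeight w (p.1 ++ q.1.tail) :=
        dist_le_walkWeight w (isWalk_append p.2 q.2)
    _ = walkWeight w p.1 + walkWeight w q.1 :=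
        walkWeight_append w p.1 q.1 p.2.2.2 q.2.2.1

variable {V' : Type*} (w' : V' → V' → ℝ≥0∞)

lemma dist_proj (π : V' → V)
    (H : ∀ x y : V', π x = π y ∨ w (π x) (π y) ≤ w' x y) :
    ∀ (p : List V') {x y : V'}, IsWalk x y p → dist w (π x) (π y) ≤ walkWeight w' p
  | [], _, _, h => absurd rfl h.1
  | [a], x, y, h => by
      have hx : a = x := by simpa using h.2.1
      have hy : a = y := by simpa using h.2.2
      subst hx
      rw [← hy]
      simpa [walkWeight] using dist_self_le w (π a)
  | a :: c :: p', x, y, h => by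
      have hx : a = x := by simpa using h.2.1
      subst hx
      have h' : IsWalk c y (c :: p') :=
        ⟨by simp, rfl, by simpa [List.getLast?_cons_cons] using h.2.2⟩
      have ih := dist_proj π H (c :: p') h'
      show dist w (π a) (π y) ≤ w' a c + walkWeight w' (c :: p')
      rcases H a c with h1 | h2
      · calc dist w (π a) (π y) = dist w (π c) (π y) := by rw [h1]
          _ ≤ walkWeight w' (c :: p') := ih
          _ ≤ w' a c + walkWeight w' (c :: p') := le_add_self
      · calc dist w (π a) (π y) ≤ dist w (π a) (π c) + dist w (π c) (π y) :=
            dist_triangle w _ _ _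
          _ ≤ w' a c + walkWeight w' (c :: p') :=
            add_le_add ((dist_le_w w _ _).trans h2) ih

lemma dist_le_dist_proj (π : V' → V)
    (H : ∀ x y : V', π x = π y ∨ w (π x) (π y) ≤ w' x y) (x y : V') :
    dist w (π x) (π y) ≤ dist w' x y :=
  le_iInf fun p => dist_proj w w' π H p.1 p.2

lemma dist_emb (φ : V → V')
    (H : ∀ u v : V, dist w' (φ u) (φ v) ≤ w u v) :
    ∀ (p : List V) {u v : V}, IsWalk u v p → dist w' (φ u) (φ v) ≤ walkWeight w p
  | [], _, _, h => absurd rfl h.1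
  | [a], u, v, h => by
      have hx : a = u := by simpa using h.2.1
      have hy : a = v := by simpa using h.2.2
      subst hx; rw [← hy]
      simpa [walkWeight] using dist_self_le w' (φ a)
  | a :: c :: p', u, v, h => by
      have hx : a = u := by simpa using h.2.1
      subst hx
      have h' : IsWalk c v (c :: p') :=
        ⟨by simp, rfl, by simpa [List.getLast?_cons_cons] using h.2.2⟩
      have ih := dist_emb φ H (c :: p') h'
      show dist w' (φ a) (φ v) ≤ w a c + walkWeight w (c :: p')
      calc dist w' (φ a) (φ v) ≤ dist w' (φ a) (φ c) + dist w' (φ c) (φ v) :=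
            dist_triangle w' _ _ _
        _ ≤ w a c + walkWeight w (c :: p') := add_le_add (H a c) ih

lemma dist_le_dist_emb (φ : V → V')
    (H : ∀ u v : V, dist w' (φ u) (φ v) ≤ w u v) (u v : V) :
    dist w' (φ u) (φ v) ≤ dist w u v :=
  le_iInf fun p => dist_emb w w' φ H p.1 p.2

end WalkLemmas
section Construction
open Classical

variable {V : Type} [Fintype V] (w : V → V → ℝ≥0∞)

def Edge := {e : V × V // w e.1 e.2 < ⊤}

instance : Finite (Edge w) := Subtype.finite
noncomputable instance : Fintype (Edge w) := Fintype.ofFinite _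
noncomputable instance : LinearOrder (Edge w) :=
  LinearOrder.lift' (fun e => Fintype.equivFin (Edge w) e)
    (fun _ _ h => (Fintype.equivFin (Edge w)).injective h)

def src (e : Edge w) : V := e.1.1
def tgt (e : Edge w) : V := e.1.2

noncomputable def outSet (u : V) : Finset (Edge w) :=
  Finset.univ.filter (fun e => src w e = u)
noncomputable def inSet (v : V) : Finset (Edge w) :=
  Finset.univ.filter (fun e => tgt w e = v)

lemma mem_outSet {u : V} {e : Edge w} : e ∈ outSet w u ↔ src w e = u := by
  simp [outSet]
lemma mem_inSet {v : V} {e : Edge w} : e ∈ inSet w v ↔ tgt w e = v := by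
  simp [inSet]

noncomputable def firstOut (u : V) : Option (Edge w) :=
  if h : (outSet w u).Nonempty then some ((outSet w u).min' h) else none

noncomputable def nextOut (e : Edge w) : Option (Edge w) :=
  if h : ((outSet w (src w e)).filter (e < ·)).Nonempty
  then some (((outSet w (src w e)).filter (e < ·)).min' h) else none

noncomputable def nextIn (e : Edge w) : Option (Edge w) :=
  if h : ((inSet w (tgt w e)).filter (e < ·)).Nonempty
  then some (((inSet w (tgt w e)).filter (e < ·)).min' h) else none

lemma firstOut_eq_some {u : V} {f : Edge w} :
    firstOut w u = some f ↔ src w f = u ∧ ∀ g : Edge w, src w g = u → f ≤ g := by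
  constructor
  · intro h
    rw [firstOut] at h
    by_cases hne : (outSet w u).Nonempty
    · rw [dif_pos hne] at h
      have hf := Option.some.inj h
      subst hf
      exact ⟨(mem_outSet w).1 (Finset.min'_mem _ hne),
        fun g hg => Finset.min'_le _ _ ((mem_outSet w).2 hg)⟩
    · rw [dif_neg hne] at h; exact absurd h (by simp)
  · rintro ⟨h1, h2⟩
    have hne : (outSet w u).Nonempty := ⟨f, (mem_outSet w).2 h1⟩
    rw [firstOut, dif_pos hne]
    congr 1
    exact le_antisymm (Finset.min'_le _ _ ((mem_outSet w).2 h1))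
      (Finset.le_min' _ _ _ (fun g hg => h2 g ((mem_outSet w).1 hg)))

lemma nextOut_eq_some {e f : Edge w} :
    nextOut w e = some f ↔
      src w f = src w e ∧ e < f ∧ ∀ g : Edge w, src w g = src w e → e < g → f ≤ g := by
  constructor
  · intro h
    rw [nextOut] at h
    by_cases hne : ((outSet w (src w e)).filter (e < ·)).Nonempty
    · rw [dif_pos hne] at h
      have hf := Option.some.inj h
      subst hf
      have hmem := Finset.min'_mem _ hne
      rw [Finset.mem_filter, mem_outSet] at hmem
      exact ⟨hmem.1, hmem.2, fun g hg1 hg2 =>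
        Finset.min'_le _ _ (by rw [Finset.mem_filter, mem_outSet]; exact ⟨hg1, hg2⟩)⟩
    · rw [dif_neg hne] at h; exact absurd h (by simp)
  · rintro ⟨h1, h2, h3⟩
    have hmem : f ∈ (outSet w (src w e)).filter (e < ·) := by
      rw [Finset.mem_filter, mem_outSet]; exact ⟨h1, h2⟩
    have hne : ((outSet w (src w e)).filter (e < ·)).Nonempty := ⟨f, hmem⟩
    rw [nextOut, dif_pos hne]
    congr 1
    refine le_antisymm (Finset.min'_le _ _ hmem) (Finset.le_min' _ _ _ (fun g hg => ?_))
    rw [Finset.mem_filter, mem_outSet] at hg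
    exact h3 g hg.1 hg.2

lemma nextIn_eq_some {e f : Edge w} :
    nextIn w e = some f ↔
      tgt w f = tgt w e ∧ e < f ∧ ∀ g : Edge w, tgt w g = tgt w e → e < g → f ≤ g := by
  constructor
  · intro h
    rw [nextIn] at h
    by_cases hne : ((inSet w (tgt w e)).filter (e < ·)).Nonempty
    · rw [dif_pos hne] at h
      have hf := Option.some.inj h
      subst hf
      have hmem := Finset.min'_mem _ hne
      rw [Finset.mem_filter, mem_inSet] at hmem
      exact ⟨hmem.1, hmem.2, fun g hg1 hg2 =>
        Finset.min'_le _ _ (by rw [Finset.mem_filter, mem_inSet]; exact ⟨hg1, hg2⟩)⟩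
    · rw [dif_neg hne] at h; exact absurd h (by simp)
  · rintro ⟨h1, h2, h3⟩
    have hmem : f ∈ (inSet w (tgt w e)).filter (e < ·) := by
      rw [Finset.mem_filter, mem_inSet]; exact ⟨h1, h2⟩
    have hne : ((inSet w (tgt w e)).filter (e < ·)).Nonempty := ⟨f, hmem⟩
    rw [nextIn, dif_pos hne]
    congr 1
    refine le_antisymm (Finset.min'_le _ _ hmem) (Finset.le_min' _ _ _ (fun g hg => ?_))
    rw [Finset.mem_filter, mem_inSet] at hg
    exact h3 g hg.1 hg.2

lemma nextIn_eq_none {e : Edge w} :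
    nextIn w e = none ↔ ∀ g : Edge w, tgt w g = tgt w e → ¬ e < g := by
  rw [nextIn]
  split_ifs with hne
  · simp only [reduceCtorEq, false_iff, not_forall]
    obtain ⟨g, hg⟩ := hne
    rw [Finset.mem_filter, mem_inSet] at hg
    exact ⟨g, hg.1, not_not_intro hg.2⟩
  · simp only [true_iff]
    intro g hg hlt
    exact hne ⟨g, by rw [Finset.mem_filter, mem_inSet]; exact ⟨hg, hlt⟩⟩

-- uniqueness lemmas
lemma nextOut_inj {e₁ e₂ f : Edge w} (h₁ : nextOut w e₁ = some f)
    (h₂ : nextOut w e₂ = some f) : e₁ = e₂ := by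
  rw [nextOut_eq_some] at h₁ h₂
  obtain ⟨hs₁, hl₁, hm₁⟩ := h₁
  obtain ⟨hs₂, hl₂, hm₂⟩ := h₂
  by_contra hne
  rcases lt_or_gt_of_ne hne with h | h
  · exact absurd (hm₁ e₂ (hs₂.symm.trans hs₁ ▸ rfl) h) (not_le.2 hl₂)
  · exact absurd (hm₂ e₁ (hs₁.symm.trans hs₂ ▸ rfl) h) (not_le.2 hl₁)

lemma nextIn_inj {e₁ e₂ f : Edge w} (h₁ : nextIn w e₁ = some f)
    (h₂ : nextIn w e₂ = some f) : e₁ = e₂ := by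
  rw [nextIn_eq_some] at h₁ h₂
  obtain ⟨hs₁, hl₁, hm₁⟩ := h₁
  obtain ⟨hs₂, hl₂, hm₂⟩ := h₂
  by_contra hne
  rcases lt_or_gt_of_ne hne with h | h
  · exact absurd (hm₁ e₂ (hs₂.symm.trans hs₁ ▸ rfl) h) (not_le.2 hl₂)
  · exact absurd (hm₂ e₁ (hs₁.symm.trans hs₂ ▸ rfl) h) (not_le.2 hl₁)

lemma firstOut_nextOut {e f : Edge w} (h₁ : firstOut w (src w f) = some f)
    (h₂ : nextOut w e = some f) : False := by
  rw [firstOut_eq_some] at h₁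
  rw [nextOut_eq_some] at h₂
  exact absurd (h₁.2 e h₂.1.symm) (not_le.2 h₂.2.1)

lemma lastIn_inj {e₁ e₂ : Edge w} (h₁ : nextIn w e₁ = none) (h₂ : nextIn w e₂ = none)
    (h : tgt w e₁ = tgt w e₂) : e₁ = e₂ := by
  rw [nextIn_eq_none] at h₁ h₂
  by_contra hne
  rcases lt_or_gt_of_ne hne with hlt | hlt
  · exact h₁ e₂ h.symm hlt
  · exact h₂ e₁ h hlt

end Construction

section Gadget
open Classical

variable {V : Type} [Fintype V] (w : V → V → ℝ≥0∞)

/-- The vertex type of the gadget graph. -/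
abbrev GV (w : V → V → ℝ≥0∞) : Type := V ⊕ (Edge w ⊕ Edge w)

noncomputable instance : WellFoundedLT (Edge w) := Finite.to_wellFoundedLT
noncomputable instance : WellFoundedGT (Edge w) := Finite.to_wellFoundedGT

def aN (e : Edge w) : GV w := Sum.inr (Sum.inl e)
def bN (e : Edge w) : GV w := Sum.inr (Sum.inr e)

noncomputable def ow (o : Option (GV w)) (y : GV w) : ℝ≥0∞ :=
  if o = some y then 0 else ⊤

noncomputable def succB (e : Edge w) : GV w :=
  match nextIn w e with
  | some f => bN w f
  | none => Sum.inl (tgt w e)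

noncomputable def gw : GV w → GV w → ℝ≥0∞
  | .inl u, y => ow w ((firstOut w u).map (aN w)) y
  | .inr (.inl e), y =>
      min (if y = bN w e then w (src w e) (tgt w e) else ⊤) (ow w ((nextOut w e).map (aN w)) y)
  | .inr (.inr e), y => ow w (some (succB w e)) y

def proj : GV w → V := Sum.elim id (Sum.elim (src w) (tgt w))

lemma aN_inj : Function.Injective (aN w) := by
  intro a b h; simpa [aN] using h
lemma bN_inj : Function.Injective (bN w) := by
  intro a b h; simpa [bN] using h
lemma aN_ne_bN (e f : Edge w) : aN w e ≠ bN w f := by simp [aN, bN]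
lemma aN_ne_inl (e : Edge w) (u : V) : aN w e ≠ Sum.inl u := by simp [aN]
lemma bN_ne_inl (e : Edge w) (u : V) : bN w e ≠ Sum.inl u := by simp [bN]

lemma ow_lt_top {o : Option (GV w)} {y : GV w} (h : ow w o y < ⊤) :
    o = some y ∧ ow w o y = 0 := by
  rw [ow] at h ⊢
  split_ifs at h ⊢ with h1
  · exact ⟨h1, rfl⟩
  · exact absurd h (lt_irrefl _)

lemma ow_some (y : GV w) : ow w (some y) y = 0 := by simp [ow]

lemma gw_first {u : V} {f : Edge w} (h : firstOut w u = some f) :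
    gw w (Sum.inl u) (aN w f) = 0 := by
  show ow w ((firstOut w u).map (aN w)) (aN w f) = 0
  rw [h, Option.map_some, ow_some]

lemma gw_ab (e : Edge w) : gw w (aN w e) (bN w e) = w (src w e) (tgt w e) := by
  show min _ _ = _
  rw [if_pos rfl]
  have : ow w ((nextOut w e).map (aN w)) (bN w e) = ⊤ := by
    rw [ow, if_neg]
    cases h : nextOut w e with
    | none => simp
    | some f => simp [aN_ne_bN]
  rw [this, min_eq_left le_top]

lemma gw_next {e f : Edge w} (h : nextOut w e = some f) :
    gw w (aN w e) (aN w f) = 0 := by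
  show min _ _ = 0
  rw [if_neg (aN_ne_bN w f e), h, Option.map_some, ow_some]
  exact min_eq_right zero_le

lemma gw_succB (e : Edge w) : gw w (bN w e) (succB w e) = 0 := ow_some w _

lemma gw_lt_top {x y : GV w} (h : gw w x y < ⊤) :
    (∃ u f, x = Sum.inl u ∧ y = aN w f ∧ firstOut w u = some f) ∨
    (∃ e, x = aN w e ∧ y = bN w e) ∨
    (∃ e f, x = aN w e ∧ y = aN w f ∧ nextOut w e = some f) ∨
    (∃ e, x = bN w e ∧ y = succB w e) := by
  match x with
  | Sum.inl u =>
    have h' := (ow_lt_top w (h : ow w ((firstOut w u).map (aN w)) y < ⊤)).1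
    rw [Option.map_eq_some_iff] at h'
    obtain ⟨f, hf, hy⟩ := h'
    exact Or.inl ⟨u, f, rfl, hy.symm, hf⟩
  | Sum.inr (Sum.inl e) =>
    have h' : min (if y = bN w e then w (src w e) (tgt w e) else ⊤)
        (ow w ((nextOut w e).map (aN w)) y) < ⊤ := h
    rw [min_lt_iff] at h'
    rcases h' with h' | h'
    · have hy : y = bN w e := by
        by_contra hne
        rw [if_neg hne] at h'
        exact absurd h' (lt_irrefl _)
      exact Or.inr (Or.inl ⟨e, rfl, hy⟩)
    · have h'' := (ow_lt_top w h').1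
      rw [Option.map_eq_some_iff] at h''
      obtain ⟨f, hf, hy⟩ := h''
      exact Or.inr (Or.inr (Or.inl ⟨e, f, rfl, hy.symm, hf⟩))
  | Sum.inr (Sum.inr e) =>
    have h' := (ow_lt_top w (h : ow w (some (succB w e)) y < ⊤)).1
    exact Or.inr (Or.inr (Or.inr ⟨e, rfl, (Option.some.inj h').symm⟩))

lemma gw_vals {x y : GV w} (h : gw w x y < ⊤) :
    gw w x y = 0 ∨ ∃ u v : V, w u v < ⊤ ∧ gw w x y = w u v := by
  rcases gw_lt_top w h with ⟨u, f, rfl, rfl, hf⟩ | ⟨e, rfl, rfl⟩ | ⟨e, f, rfl, rfl, hf⟩ |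
    ⟨e, rfl, rfl⟩
  · exact Or.inl (gw_first w hf)
  · exact Or.inr ⟨src w e, tgt w e, e.2, gw_ab w e⟩
  · exact Or.inl (gw_next w hf)
  · exact Or.inl (gw_succB w e)

lemma distA (e : Edge w) : dist (gw w) (Sum.inl (src w e)) (aN w e) ≤ 0 := by
  induction e using WellFoundedLT.induction with
  | _ e ih =>
    by_cases hfirst : firstOut w (src w e) = some e
    · exact le_of_le_of_eq (dist_le_w (gw w) _ _) (gw_first w hfirst)
    · have hmem : e ∈ outSet w (src w e) := (mem_outSet w).2 rfl
      have hne : (outSet w (src w e)).Nonempty := ⟨e, hmem⟩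
      have hfo : firstOut w (src w e) = some ((outSet w (src w e)).min' hne) := by
        rw [firstOut, dif_pos hne]
      have hflt : (outSet w (src w e)).min' hne < e :=
        (Finset.min'_le _ _ hmem).lt_of_ne (fun hh => hfirst (by rw [hfo, hh]))
      have hT : ((outSet w (src w e)).filter (· < e)).Nonempty :=
        ⟨_, Finset.mem_filter.2 ⟨Finset.min'_mem _ hne, hflt⟩⟩
      have he'mem := Finset.max'_mem _ hT
      rw [Finset.mem_filter, mem_outSet] at he'mem
      obtain ⟨hsrc', hlt'⟩ := he'mem
      set e' := ((outSet w (src w e)).filter (· < e)).max' hT with he'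
      have hnext : nextOut w e' = some e := by
        rw [nextOut_eq_some]
        refine ⟨by rw [hsrc'], hlt', fun g hg1 hg2 => ?_⟩
        by_contra hgt
        push_neg at hgt
        have hgmem : g ∈ (outSet w (src w e)).filter (· < e) :=
          Finset.mem_filter.2 ⟨(mem_outSet w).2 (hg1.trans hsrc'), hgt⟩
        exact absurd (Finset.le_max' _ g hgmem) (not_le.2 hg2)
      have hih := ih e' hlt'
      rw [hsrc'] at hih
      calc dist (gw w) (Sum.inl (src w e)) (aN w e)
          ≤ dist (gw w) (Sum.inl (src w e)) (aN w e') + dist (gw w) (aN w e') (aN w e) :=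
            dist_triangle _ _ _ _
        _ ≤ 0 + gw w (aN w e') (aN w e) := add_le_add hih (dist_le_w _ _ _)
        _ = 0 := by rw [gw_next w hnext, add_zero]

lemma distB (e : Edge w) : dist (gw w) (bN w e) (Sum.inl (tgt w e)) ≤ 0 := by
  induction e using WellFoundedGT.induction with
  | _ e ih =>
    cases h : nextIn w e with
    | none =>
      have hs : succB w e = Sum.inl (tgt w e) := by rw [succB, h]
      have := gw_succB w e
      rw [hs] at this
      exact le_of_le_of_eq (dist_le_w (gw w) _ _) this
    | some f =>
      obtain ⟨htgt, hlt, _⟩ := (nextIn_eq_some w).1 h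
      have hs : succB w e = bN w f := by rw [succB, h]
      have hih := ih f hlt
      rw [htgt] at hih
      have h0 : gw w (bN w e) (bN w f) = 0 := by
        have := gw_succB w e; rwa [hs] at this
      calc dist (gw w) (bN w e) (Sum.inl (tgt w e))
          ≤ dist (gw w) (bN w e) (bN w f) + dist (gw w) (bN w f) (Sum.inl (tgt w e)) :=
            dist_triangle _ _ _ _
        _ ≤ gw w (bN w e) (bN w f) + 0 := add_le_add (dist_le_w _ _ _) hih
        _ = 0 := by rw [h0, zero_add]

lemma dist_gw_le (u v : V) : dist (gw w) (Sum.inl u) (Sum.inl v) ≤ w u v := by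
  by_cases h : w u v < ⊤
  · set e : Edge w := ⟨(u, v), h⟩ with he
    have hsrc : src w e = u := rfl
    have htgt : tgt w e = v := rfl
    calc dist (gw w) (Sum.inl u) (Sum.inl v)
        ≤ dist (gw w) (Sum.inl u) (aN w e) +
            (dist (gw w) (aN w e) (bN w e) + dist (gw w) (bN w e) (Sum.inl v)) := by
          refine (dist_triangle _ _ (aN w e) _).trans ?_
          exact add_le_add le_rfl (dist_triangle _ _ (bN w e) _)
      _ ≤ 0 + (w u v + 0) := by
          refine add_le_add ?_ (add_le_add ?_ ?_)
          · have := distA w e; rwa [hsrc] at this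
          · exact le_of_le_of_eq (dist_le_w _ _ _) (gw_ab w e)
          · have := distB w e; rwa [htgt] at this
      _ = w u v := by rw [zero_add, add_zero]
  · rw [not_lt, top_le_iff] at h
    rw [h]; exact le_top

lemma proj_inl (u : V) : proj w (Sum.inl u) = u := rfl
lemma proj_aN (e : Edge w) : proj w (aN w e) = src w e := rfl
lemma proj_bN (e : Edge w) : proj w (bN w e) = tgt w e := rfl

lemma gw_proj (x y : GV w) :
    proj w x = proj w y ∨ w (proj w x) (proj w y) ≤ gw w x y := by
  by_cases h : gw w x y < ⊤
  · rcases gw_lt_top w h with ⟨u, f, rfl, rfl, hf⟩ | ⟨e, rfl, rfl⟩ | ⟨e, f, rfl, rfl, hf⟩ |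
      ⟨e, rfl, rfl⟩
    · left
      rw [proj_inl, proj_aN, ((firstOut_eq_some w).1 hf).1]
    · right
      rw [proj_aN, proj_bN, gw_ab]
    · left
      rw [proj_aN, proj_aN, ((nextOut_eq_some w).1 hf).1]
    · left
      rw [proj_bN]
      cases hn : nextIn w e with
      | none =>
        have hs : succB w e = Sum.inl (tgt w e) := by rw [succB, hn]
        rw [hs, proj_inl]
      | some f =>
        have hs : succB w e = bN w f := by rw [succB, hn]
        rw [hs, proj_bN, ((nextIn_eq_some w).1 hn).1]
  · right
    rw [not_lt, top_le_iff] at h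
    rw [h]; exact le_top

lemma dist_gw_eq (u v : V) :
    dist (gw w) (Sum.inl u) (Sum.inl v) = dist w u v := by
  refine le_antisymm ?_ ?_
  · exact dist_le_dist_emb w (gw w) Sum.inl (dist_gw_le w) u v
  · have := dist_le_dist_proj w (gw w) (proj w) (gw_proj w) (Sum.inl u) (Sum.inl v)
    simpa [proj_inl] using this


lemma ncard_le_one_of_subsingleton {α : Type*} {s : Set α} (h : s.Subsingleton) :
    s.ncard ≤ 1 := by
  rcases h.eq_empty_or_singleton with rfl | ⟨a, rfl⟩ <;> simp

lemma succB_eq_inl {e : Edge w} {v : V} (h : succB w e = Sum.inl v) :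
    nextIn w e = none ∧ tgt w e = v := by
  cases hn : nextIn w e with
  | none =>
    have hs : succB w e = Sum.inl (tgt w e) := by rw [succB, hn]
    rw [hs] at h
    exact ⟨rfl, Sum.inl.inj h⟩
  | some f =>
    have hs : succB w e = bN w f := by rw [succB, hn]
    rw [hs] at h
    exact absurd h (bN_ne_inl w f v)

lemma succB_eq_bN {e f : Edge w} (h : succB w e = bN w f) : nextIn w e = some f := by
  cases hn : nextIn w e with
  | none =>
    have hs : succB w e = Sum.inl (tgt w e) := by rw [succB, hn]
    rw [hs] at h
    exact absurd h.symm (bN_ne_inl w f _)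
  | some g =>
    have hs : succB w e = bN w g := by rw [succB, hn]
    rw [hs] at h
    rw [bN_inj w h.symm]

lemma succB_ne_aN (e f : Edge w) : succB w e ≠ aN w f := by
  cases hn : nextIn w e with
  | none =>
    have hs : succB w e = Sum.inl (tgt w e) := by rw [succB, hn]
    rw [hs]
    exact fun h => aN_ne_inl w f _ h.symm
  | some g =>
    have hs : succB w e = bN w g := by rw [succB, hn]
    rw [hs]
    exact fun h => aN_ne_bN w f g h.symm

lemma out_deg (x : GV w) : ({y : GV w | gw w x y < ⊤}).ncard ≤ 2 := by
  match x with
  | Sum.inl u =>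
    refine le_trans (ncard_le_one_of_subsingleton ?_) one_le_two
    intro y1 h1 y2 h2
    have e1 := (ow_lt_top w (h1 : ow w ((firstOut w u).map (aN w)) y1 < ⊤)).1
    have e2 := (ow_lt_top w (h2 : ow w ((firstOut w u).map (aN w)) y2 < ⊤)).1
    exact Option.some.inj (e1.symm.trans e2)
  | Sum.inr (Sum.inl e) =>
    have hsub : {y : GV w | gw w (Sum.inr (Sum.inl e)) y < ⊤} ⊆
        {y : GV w | y = bN w e} ∪ {y : GV w | ∃ f, nextOut w e = some f ∧ y = aN w f} := by
      intro y hy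
      have h' : min (if y = bN w e then w (src w e) (tgt w e) else ⊤)
          (ow w ((nextOut w e).map (aN w)) y) < ⊤ := hy
      rw [min_lt_iff] at h'
      rcases h' with h' | h'
      · left
        by_contra hne
        rw [Set.mem_setOf_eq] at hne
        rw [if_neg hne] at h'
        exact absurd h' (lt_irrefl _)
      · right
        have h'' := (ow_lt_top w h').1
        rw [Option.map_eq_some_iff] at h''
        obtain ⟨f, hf, hyf⟩ := h''
        exact ⟨f, hf, hyf.symm⟩
    refine le_trans (Set.ncard_le_ncard hsub (Set.toFinite _)) ?_
    refine le_trans (Set.ncard_union_le _ _) ?_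
    have h1 : ({y : GV w | y = bN w e}).ncard ≤ 1 :=
      ncard_le_one_of_subsingleton (fun a ha b hb => ha.trans hb.symm)
    have h2 : ({y : GV w | ∃ f, nextOut w e = some f ∧ y = aN w f}).ncard ≤ 1 := by
      refine ncard_le_one_of_subsingleton ?_
      rintro a ⟨f, hf, rfl⟩ b ⟨g, hg, rfl⟩
      rw [Option.some.inj (hf.symm.trans hg)]
    omega
  | Sum.inr (Sum.inr e) =>
    refine le_trans (ncard_le_one_of_subsingleton ?_) one_le_two
    intro y1 h1 y2 h2
    have e1 := (ow_lt_top w (h1 : ow w (some (succB w e)) y1 < ⊤)).1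
    have e2 := (ow_lt_top w (h2 : ow w (some (succB w e)) y2 < ⊤)).1
    exact (Option.some.inj e1).symm.trans (Option.some.inj e2)

lemma in_deg (y : GV w) : ({x : GV w | gw w x y < ⊤}).ncard ≤ 2 := by
  match y with
  | Sum.inl v =>
    refine le_trans (ncard_le_one_of_subsingleton ?_) one_le_two
    intro x1 h1 x2 h2
    have key : ∀ x : GV w, gw w x (Sum.inl v) < ⊤ →
        ∃ e, x = bN w e ∧ nextIn w e = none ∧ tgt w e = v := by
      intro x hx
      rcases gw_lt_top w hx with ⟨u, f, rfl, hy, _⟩ | ⟨e, rfl, hy⟩ |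
        ⟨e, f, rfl, hy, _⟩ | ⟨e, rfl, hy⟩
      · exact absurd hy.symm (aN_ne_inl w f v)
      · exact absurd hy.symm (bN_ne_inl w e v)
      · exact absurd hy.symm (aN_ne_inl w f v)
      · obtain ⟨hn, ht⟩ := succB_eq_inl w hy.symm
        exact ⟨e, rfl, hn, ht⟩
    obtain ⟨e1, rfl, hn1, ht1⟩ := key x1 h1
    obtain ⟨e2, rfl, hn2, ht2⟩ := key x2 h2
    rw [lastIn_inj w hn1 hn2 (ht1.trans ht2.symm)]
  | Sum.inr (Sum.inl f) =>
    have hsub : {x : GV w | gw w x (aN w f) < ⊤} ⊆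
        {x : GV w | x = Sum.inl (src w f) ∧ firstOut w (src w f) = some f} ∪
        {x : GV w | ∃ e, nextOut w e = some f ∧ x = aN w e} := by
      intro x hx
      rcases gw_lt_top w hx with ⟨u, g, rfl, hy, hg⟩ | ⟨e, rfl, hy⟩ |
        ⟨e, g, rfl, hy, hg⟩ | ⟨e, rfl, hy⟩
      · obtain rfl : g = f := aN_inj w hy.symm
        have hu : src w g = u := ((firstOut_eq_some w).1 hg).1
        exact Or.inl ⟨by rw [hu], by rw [hu]; exact hg⟩
      · exact absurd hy (aN_ne_bN w f e)
      · obtain rfl : g = f := aN_inj w hy.symm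
        exact Or.inr ⟨e, hg, rfl⟩
      · exact absurd hy.symm (succB_ne_aN w e f)
    refine le_trans (Set.ncard_le_ncard hsub (Set.toFinite _)) ?_
    refine le_trans (Set.ncard_union_le _ _) ?_
    have h1 : ({x : GV w | x = Sum.inl (src w f) ∧ firstOut w (src w f) = some f}).ncard ≤ 1 :=
      ncard_le_one_of_subsingleton (fun a ha b hb => ha.1.trans hb.1.symm)
    have h2 : ({x : GV w | ∃ e, nextOut w e = some f ∧ x = aN w e}).ncard ≤ 1 := by
      refine ncard_le_one_of_subsingleton ?_
      rintro a ⟨e1, he1, rfl⟩ b ⟨e2, he2, rfl⟩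
      rw [nextOut_inj w he1 he2]
    omega
  | Sum.inr (Sum.inr f) =>
    have hsub : {x : GV w | gw w x (bN w f) < ⊤} ⊆
        {x : GV w | x = aN w f} ∪ {x : GV w | ∃ e, nextIn w e = some f ∧ x = bN w e} := by
      intro x hx
      rcases gw_lt_top w hx with ⟨u, g, rfl, hy, hg⟩ | ⟨e, rfl, hy⟩ |
        ⟨e, g, rfl, hy, hg⟩ | ⟨e, rfl, hy⟩
      · exact absurd hy.symm (aN_ne_bN w g f)
      · obtain rfl : e = f := bN_inj w hy.symm
        exact Or.inl rfl
      · exact absurd hy.symm (aN_ne_bN w g f)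
      · exact Or.inr ⟨e, succB_eq_bN w hy.symm, rfl⟩
    refine le_trans (Set.ncard_le_ncard hsub (Set.toFinite _)) ?_
    refine le_trans (Set.ncard_union_le _ _) ?_
    have h1 : ({x : GV w | x = aN w f}).ncard ≤ 1 :=
      ncard_le_one_of_subsingleton (fun a ha b hb => ha.trans hb.symm)
    have h2 : ({x : GV w | ∃ e, nextIn w e = some f ∧ x = bN w e}).ncard ≤ 1 := by
      refine ncard_le_one_of_subsingleton ?_
      rintro a ⟨e1, he1, rfl⟩ b ⟨e2, he2, rfl⟩
      rw [nextIn_inj w he1 he2]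
    omega

noncomputable def countF [Nonempty (Edge w)] : GV w × GV w → Edge w × Fin 3 :=
  fun p =>
    match p.2, p.1 with
    | Sum.inr (Sum.inl f), _ => (f, 0)
    | _, Sum.inr (Sum.inl e) => (e, 1)
    | _, Sum.inr (Sum.inr e) => (e, 2)
    | _, _ => (Classical.arbitrary _, 0)

lemma count_edges :
    ({p : GV w × GV w | gw w p.1 p.2 < ⊤}).ncard ≤ 3 * Fintype.card (Edge w) := by
  rcases isEmpty_or_nonempty (Edge w) with hE | hE
  · have hempty : {p : GV w × GV w | gw w p.1 p.2 < ⊤} = ∅ := by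
      ext p
      simp only [Set.mem_setOf_eq, Set.mem_empty_iff_false, iff_false, not_lt, top_le_iff]
      match p with
      | (Sum.inl u, y) =>
        have hout : firstOut w u = none := by
          rw [firstOut, dif_neg]
          rintro ⟨e, -⟩
          exact hE.false e
        show ow w ((firstOut w u).map (aN w)) y = ⊤
        rw [hout, Option.map_none, ow, if_neg (by simp)]
      | (Sum.inr (Sum.inl e), _) => exact (hE.false e).elim
      | (Sum.inr (Sum.inr e), _) => exact (hE.false e).elim
    rw [hempty, Set.ncard_empty]
    exact Nat.zero_le _
  · have hinj : Set.InjOn (countF w) {p : GV w × GV w | gw w p.1 p.2 < ⊤} := by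
      rintro ⟨x1, y1⟩ h1 ⟨x2, y2⟩ h2 heq
      have key : ∀ x y : GV w, gw w x y < ⊤ →
          (∃ f, y = aN w f ∧ countF w (x, y) = (f, 0) ∧
            ((x = Sum.inl (src w f) ∧ firstOut w (src w f) = some f) ∨
             (∃ e, x = aN w e ∧ nextOut w e = some f))) ∨
          (∃ e, x = aN w e ∧ y = bN w e ∧ countF w (x, y) = (e, 1)) ∨
          (∃ e, x = bN w e ∧ y = succB w e ∧ countF w (x, y) = (e, 2)) := by
        intro x y hxy
        rcases gw_lt_top w hxy with ⟨u, f, rfl, rfl, hf⟩ | ⟨e, rfl, rfl⟩ |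
          ⟨e, f, rfl, rfl, hf⟩ | ⟨e, rfl, rfl⟩
        · refine Or.inl ⟨f, rfl, rfl, Or.inl ?_⟩
          have hu : src w f = u := ((firstOut_eq_some w).1 hf).1
          exact ⟨by rw [hu], by rw [hu]; exact hf⟩
        · exact Or.inr (Or.inl ⟨e, rfl, rfl, rfl⟩)
        · exact Or.inl ⟨f, rfl, rfl, Or.inr ⟨e, rfl, hf⟩⟩
        · refine Or.inr (Or.inr ⟨e, rfl, rfl, ?_⟩)
          cases hn : nextIn w e with
          | none =>
            have hs : succB w e = Sum.inl (tgt w e) := by rw [succB, hn]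
            rw [hs]; rfl
          | some g =>
            have hs : succB w e = bN w g := by rw [succB, hn]
            rw [hs]; rfl
      rcases key x1 y1 h1 with ⟨f1, rfl, hc1, hx1⟩ | ⟨e1, rfl, rfl, hc1⟩ | ⟨e1, rfl, rfl, hc1⟩ <;>
        rcases key x2 y2 h2 with ⟨f2, rfl, hc2, hx2⟩ | ⟨e2, rfl, rfl, hc2⟩ | ⟨e2, rfl, rfl, hc2⟩ <;>
          rw [hc1, hc2, Prod.mk.injEq] at heq
      · -- both slot 0
        obtain ⟨hfe, -⟩ := heq
        subst hfe
        rcases hx1 with ⟨rfl, hf1⟩ | ⟨e1, rfl, he1⟩ <;>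
          rcases hx2 with ⟨rfl, hf2⟩ | ⟨e2, rfl, he2⟩
        · rfl
        · exact absurd (firstOut_nextOut w hf1 he2) not_false
        · exact absurd (firstOut_nextOut w hf2 he1) not_false
        · rw [nextOut_inj w he1 he2]
      · exact absurd heq.2 (by decide)
      · exact absurd heq.2 (by decide)
      · exact absurd heq.2 (by decide)
      · obtain ⟨hfe, -⟩ := heq; subst hfe; rfl
      · exact absurd heq.2 (by decide)
      · exact absurd heq.2 (by decide)
      · exact absurd heq.2 (by decide)
      · obtain ⟨hfe, -⟩ := heq; subst hfe; rfl
    calc ({p : GV w × GV w | gw w p.1 p.2 < ⊤}).ncard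
        = ((countF w) '' {p : GV w × GV w | gw w p.1 p.2 < ⊤}).ncard :=
          (Set.ncard_image_of_injOn hinj).symm
      _ ≤ (Set.univ : Set (Edge w × Fin 3)).ncard :=
          Set.ncard_le_ncard (Set.subset_univ _) Set.finite_univ
      _ = 3 * Fintype.card (Edge w) := by
          rw [Set.ncard_univ, Nat.card_eq_fintype_card, Fintype.card_prod, Fintype.card_fin,
            Nat.mul_comm]

end Gadget



/-- Constant-degree transformation preserving shortest paths. -/
theorem constant_degree_transformation {V : Type} [Fintype V] (w : V → V → ℝ≥0∞)
    (hloop : ∀ u : V, w u u = ⊤) :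
    ∃ (V' : Type) (instV' : Fintype V') (w' : V' → V' → ℝ≥0∞) (φ : V → V'),
      Function.Injective φ ∧
      @Fintype.card V' instV' ≤
        2 * ({p : V × V | w p.1 p.2 < ⊤}).ncard + Fintype.card V ∧
      (∀ x : V', ({y : V' | w' x y < ⊤}).ncard ≤ 2 ∧
        ({y : V' | w' y x < ⊤}).ncard ≤ 2) ∧
      ({p : V' × V' | w' p.1 p.2 < ⊤}).ncard ≤
        3 * ({p : V × V | w p.1 p.2 < ⊤}).ncard ∧
      (∀ x y : V', w' x y < ⊤ → w' x y = 0 ∨ ∃ u v : V, w u v < ⊤ ∧ w' x y = w u v) ∧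
      (∀ u v : V, dist w' (φ u) (φ v) = dist w u v) := by
  classical
  have hm : ({p : V × V | w p.1 p.2 < ⊤}).ncard = Fintype.card (Edge w) := by
    rw [← Nat.card_coe_set_eq, ← Nat.card_eq_fintype_card]
    exact Nat.card_congr (Equiv.subtypeEquivRight (fun x => Iff.rfl))
  refine ⟨GV w, inferInstance, gw w, Sum.inl, Sum.inl_injective, ?_, ?_, ?_, ?_, ?_⟩
  · rw [hm]
    have hc : Fintype.card (GV w)
        = Fintype.card V + (Fintype.card (Edge w) + Fintype.card (Edge w)) := by
      simp [GV, Fintype.card_sum]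
    omega
  · intro x
    exact ⟨out_deg w x, in_deg w x⟩
  · rw [hm]
    exact count_edges w
  · intro x y hxy
    exact gw_vals w hxy
  · intro u v
    exact dist_gw_eq w u v
end SSSP
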